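/- arXiv:1610.00702 — 4 statements merged into one kernel-verified Lean document; each statement's English description precedes it below -/
import Mathlib

section
/- In a commutative integral domain D, every ideal that is maximal among the nonzero non-invertible ideals of D is a prime ideal. -/
open scoped nonZeroDivisors

/-- An ideal of a domain is invertible if it is a unit as a fractional ideal. -/
def IsInvertibleIdeal (D : Type*) [CommRing D] [IsDomain D] (I : Ideal D) : Prop :=
  IsUnit (I : FractionalIdeal D⁰ (FractionRing D))

/-- An MNI ideal: maximal among the nonzero non-invertible ideals. -/
def IsMNI (D : Type*) [CommRing D] [IsDomain D] (P : Ideal D) : Prop :=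
  P ≠ ⊥ ∧ ¬ IsInvertibleIdeal D P ∧
    ∀ J : Ideal D, J ≠ ⊥ → ¬ IsInvertibleIdeal D J → P ≤ J → J = P

theorem mni_isPrime (D : Type*) [CommRing D] [IsDomain D]
    (P : Ideal D) (hP : IsMNI D P) : P.IsPrime := by
  obtain ⟨hP0, hPni, hmax⟩ := hP
  constructor
  · intro hTop
    apply hPni
    rw [IsInvertibleIdeal, hTop]
    simp
  · intro a b hab
    by_contra hcon
    push_neg at hcon
    obtain ⟨ha, hb⟩ := hcon
    set A : Ideal D := P ⊔ Ideal.span {a} with hAdef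
    have hPA : P ≤ A := le_sup_left
    have haA : a ∈ A := Ideal.mem_sup_right (Ideal.mem_span_singleton_self a)
    have hane : A ≠ P := fun h => ha (h ▸ haA)
    have hA0 : A ≠ ⊥ := fun h => hP0 (le_bot_iff.mp (h ▸ hPA))
    have hAinv : IsInvertibleIdeal D A := by
      by_contra hni
      exact hane (hmax A hA0 hni hPA)
    obtain ⟨u, hu⟩ := hAinv
    set v : FractionalIdeal D⁰ (FractionRing D) := ((u⁻¹ : _) : FractionalIdeal D⁰ (FractionRing D)) with hvdef
    have hvu : v * (u : FractionalIdeal D⁰ (FractionRing D)) = 1 := u.inv_mul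
    have huv : (u : FractionalIdeal D⁰ (FractionRing D)) * v = 1 := u.mul_inv
    have hPleA : (P : FractionalIdeal D⁰ (FractionRing D)) ≤ (A : FractionalIdeal D⁰ (FractionRing D)) :=
      (FractionalIdeal.coeIdeal_le_coeIdeal _).mpr hPA
    have hle1 : v * (P : FractionalIdeal D⁰ (FractionRing D)) ≤ 1 := by
      calc v * (P : FractionalIdeal D⁰ (FractionRing D)) ≤ v * (A : FractionalIdeal D⁰ (FractionRing D)) :=
            by gcongr
        _ = 1 := by rw [← hu, hvu]
    obtain ⟨Q, hQ⟩ := FractionalIdeal.le_one_iff_exists_coeIdeal.mp hle1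
    -- A * Q = P
    have hAQ : (A : FractionalIdeal D⁰ (FractionRing D)) * Q = P := by
      rw [hQ, ← hu, ← mul_assoc, huv, one_mul]
    have hAQ' : A * Q = P := by
      apply (FractionalIdeal.coeIdeal_inj (K := FractionRing D)).mp
      rw [FractionalIdeal.coeIdeal_mul, hAQ]
    have hPQ : P ≤ Q := hAQ' ▸ Ideal.mul_le_right
    have hQ0 : Q ≠ ⊥ := by
      rintro rfl
      apply hP0
      rw [← hAQ', Ideal.mul_bot]
    have hQni : ¬ IsInvertibleIdeal D Q := by
      intro hQi
      apply hPni
      rw [IsInvertibleIdeal, ← hAQ, ← hu]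
      exact u.isUnit.mul hQi
    have hQP : Q = P := hmax Q hQ0 hQni hPQ
    -- so u * P = P
    rw [hQP] at hAQ
    have key : (u : FractionalIdeal D⁰ (FractionRing D)) * P = P := by
      rw [hu]; exact hAQ
    -- span {b} * A ≤ P
    have hBA : Ideal.span {b} * A ≤ P := by
      rw [hAdef, Ideal.mul_sup, Ideal.span_singleton_mul_span_singleton]
      apply sup_le
      · exact Ideal.mul_le_right
      · rw [Ideal.span_le]
        simpa [mul_comm] using hab
    have hfrac : (Ideal.span {b} : FractionalIdeal D⁰ (FractionRing D)) ≤ P := by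
      have h1 : (Ideal.span {b} : FractionalIdeal D⁰ (FractionRing D)) * A ≤ P := by
        rw [← FractionalIdeal.coeIdeal_mul]
        exact (FractionalIdeal.coeIdeal_le_coeIdeal _).mpr hBA
      have hPv : (P : FractionalIdeal D⁰ (FractionRing D)) * v = P := by
        calc (P : FractionalIdeal D⁰ (FractionRing D)) * v
            = (↑u * ↑P) * v := by rw [key]
          _ = ↑P * (↑u * v) := by ring
          _ = P := by rw [huv, mul_one]
      calc (Ideal.span {b} : FractionalIdeal D⁰ (FractionRing D))
          = (Ideal.span {b} : FractionalIdeal D⁰ (FractionRing D)) * A * v := by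
            rw [mul_assoc, ← hu, huv, mul_one]
        _ ≤ (P : FractionalIdeal D⁰ (FractionRing D)) * v := by gcongr
        _ = P := hPv
    have : Ideal.span {b} ≤ P := (FractionalIdeal.coeIdeal_le_coeIdeal _).mp hfrac
    exact hb (this (Ideal.mem_span_singleton_self b))
end

section
/- In a commutative integral domain D, any two distinct MNI ideals (ideals maximal among the nonzero non-invertible ideals) are comaximal, i.e., their sum is all of D. -/
open scoped nonZeroDivisors

/-- If `S` is an invertible ideal with inverse `t`, and `P` is MNI with `P ≤ S`,
then `↑S * ↑P = ↑P` as fractional ideals. -/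
lemma mni_absorb (D : Type*) [CommRing D] [IsDomain D]
    (P S : Ideal D) (hP : IsMNI D P) (hS : IsInvertibleIdeal D S) (hle : P ≤ S) :
    (S : FractionalIdeal D⁰ (FractionRing D)) * P = P := by
  obtain ⟨u, hu⟩ := hS
  set s : FractionalIdeal D⁰ (FractionRing D) := (S : FractionalIdeal D⁰ (FractionRing D))
  set t : FractionalIdeal D⁰ (FractionRing D) := ((u⁻¹ : _) : FractionalIdeal D⁰ (FractionRing D))
  have hst : s * t = 1 := by
    rw [← hu]; exact u.mul_inv
  -- 1 ≤ t
  have hs1 : s ≤ 1 := FractionalIdeal.coeIdeal_le_one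
  have h1t : (1 : FractionalIdeal D⁰ (FractionRing D)) ≤ t := by
    calc (1 : FractionalIdeal D⁰ (FractionRing D)) = s * t := hst.symm
    _ ≤ 1 * t := mul_le_mul_left hs1 t
    _ = t := one_mul t
  -- t * P ≤ 1, so corresponds to an ideal J
  have htP1 : t * (P : FractionalIdeal D⁰ (FractionRing D)) ≤ 1 := by
    calc t * (P : FractionalIdeal D⁰ (FractionRing D)) ≤ t * s := by
          exact mul_le_mul_right ((FractionalIdeal.coeIdeal_le_coeIdeal _).mpr hle) t
    _ = 1 := by rw [mul_comm]; exact hst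
  obtain ⟨J, hJ⟩ := FractionalIdeal.le_one_iff_exists_coeIdeal.mp htP1
  -- P ≤ J
  have hPJ : (P : FractionalIdeal D⁰ (FractionRing D)) ≤ (J : FractionalIdeal D⁰ (FractionRing D)) := by
    rw [hJ]
    calc (P : FractionalIdeal D⁰ (FractionRing D)) = 1 * P := (one_mul _).symm
    _ ≤ t * P := mul_le_mul_left h1t _
  have hPJ' : P ≤ J := (FractionalIdeal.coeIdeal_le_coeIdeal _).mp hPJ
  -- J ≠ ⊥
  have hJne : J ≠ ⊥ := by
    intro h
    apply hP.1
    apply (Submodule.eq_bot_iff _).mpr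
    intro x hx
    exact (Submodule.eq_bot_iff _).mp h x (hPJ' hx)
  -- J not invertible
  have hJni : ¬ IsInvertibleIdeal D J := by
    intro hJinv
    apply hP.2.1
    have : (P : FractionalIdeal D⁰ (FractionRing D)) = s * J := by
      rw [hJ, ← mul_assoc, hst, one_mul]
    rw [IsInvertibleIdeal, this]
    exact (IsUnit.mul ⟨u, hu⟩ hJinv)
  have hJP : J = P := hP.2.2 J hJne hJni hPJ'
  -- conclude
  have : t * (P : FractionalIdeal D⁰ (FractionRing D)) = P := by
    rw [← hJ, hJP]
  calc s * (P : FractionalIdeal D⁰ (FractionRing D)) = s * (t * P) := by rw [this]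
  _ = (s * t) * P := (mul_assoc _ _ _).symm
  _ = P := by rw [hst, one_mul]

theorem mni_comaximal (D : Type*) [CommRing D] [IsDomain D]
    (P Q : Ideal D) (hP : IsMNI D P) (hQ : IsMNI D Q) (hPQ : P ≠ Q) :
    P ⊔ Q = ⊤ := by
  set S : Ideal D := P ⊔ Q with hSdef
  have hSne : S ≠ ⊥ := by
    intro h
    exact hP.1 (le_bot_iff.mp (h ▸ (le_sup_left : P ≤ S)))
  by_cases hSinv : IsInvertibleIdeal D S
  · -- S invertible: show S * S = S and cancel
    have hP' := mni_absorb D P S hP hSinv le_sup_left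
    have hQ' := mni_absorb D Q S hQ hSinv le_sup_right
    have hSS : (S : FractionalIdeal D⁰ (FractionRing D)) * S = S := by
      have e : (S : FractionalIdeal D⁰ (FractionRing D)) = (P : FractionalIdeal D⁰ (FractionRing D)) + Q := by
        rw [hSdef, FractionalIdeal.coeIdeal_sup]
      conv_lhs => rw [e]
      rw [mul_add]
      rw [e] at hP' hQ'
      rw [hP', hQ', ← e]
    have hS1 : (S : FractionalIdeal D⁰ (FractionRing D)) = 1 := by
      obtain ⟨u, hu⟩ := hSinv
      have h2 := hSS
      rw [← hu] at h2
      have h3 : (u : FractionalIdeal D⁰ (FractionRing D)) * u = u * 1 := by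
        rw [mul_one]; exact h2
      have h4 : (u : FractionalIdeal D⁰ (FractionRing D)) = 1 := (Units.mul_right_inj u).mp h3
      rw [← hu, h4]
    apply FractionalIdeal.coeIdeal_injective (K := FractionRing D)
    show ((P ⊔ Q : Ideal D) : FractionalIdeal D⁰ (FractionRing D)) = ((⊤ : Ideal D) : FractionalIdeal D⁰ (FractionRing D))
    rw [FractionalIdeal.coeIdeal_top]
    exact hS1
  · -- S not invertible: S = P and S = Q
    have h1 : S = P := hP.2.2 S hSne hSinv le_sup_left
    have h2 : S = Q := hQ.2.2 S hSne hSinv le_sup_right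
    exact absurd (h1 ▸ h2) hPQ
end

section
/- In a commutative integral domain, any two invertible prime ideals are incomparable or equal; that is, if P and Q are invertible prime ideals with P properly contained in Q, a contradiction follows. Equivalently: an invertible prime ideal of an integral domain cannot properly contain a nonzero invertible prime ideal. -/
open scoped nonZeroDivisors

theorem invertible_primes_incomparable (D : Type*) [CommRing D] [IsDomain D]
    (P Q : Ideal D) (hP : P.IsPrime) (hQ : Q.IsPrime)
    (hPinv : IsInvertibleIdeal D P) (hQinv : IsInvertibleIdeal D Q)
    (hP0 : P ≠ ⊥) (hlt : P < Q) : False := by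
  obtain ⟨v, hv⟩ := hQinv
  have hple : (↑P : FractionalIdeal D⁰ (FractionRing D)) ≤ ↑Q :=
    (FractionalIdeal.coeIdeal_le_coeIdeal _).mpr hlt.le
  have hIle1 : (↑v⁻¹ : FractionalIdeal D⁰ (FractionRing D)) * ↑P ≤ 1 := by
    have h1 : (↑v⁻¹ : FractionalIdeal D⁰ (FractionRing D)) * ↑P ≤ ↑v⁻¹ * ↑Q :=
      FractionalIdeal.mul_le.mpr fun a ha b hb =>
        FractionalIdeal.mul_mem_mul ha (hple hb)
    have h2 : (↑v⁻¹ : FractionalIdeal D⁰ (FractionRing D)) * ↑Q = 1 := by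
      rw [← hv]; exact v.inv_mul
    rw [h2] at h1; exact h1
  obtain ⟨J, hJ⟩ := FractionalIdeal.le_one_iff_exists_coeIdeal.mp hIle1
  have hQJ : (↑Q : FractionalIdeal D⁰ (FractionRing D)) * ↑J = ↑P := by
    rw [hJ, ← mul_assoc, ← hv]
    rw [v.mul_inv, one_mul]
  have hQJP : Q * J = P := by
    apply FractionalIdeal.coeIdeal_injective (K := FractionRing D)
    show ((Q * J : Ideal D) : FractionalIdeal D⁰ (FractionRing D)) = ↑P
    rw [FractionalIdeal.coeIdeal_mul]
    exact hQJ
  have hQnleP : ¬ Q ≤ P := fun h => absurd (le_antisymm h hlt.le) hlt.ne'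
  have hJP : J ≤ P := ((Ideal.IsPrime.mul_le hP).mp hQJP.le).resolve_left hQnleP
  have hQPP : Q * P = P := by
    refine le_antisymm Ideal.mul_le_right ?_
    calc P = Q * J := hQJP.symm
      _ ≤ Q * P := Ideal.mul_mono_right hJP
  obtain ⟨u, hu⟩ := hPinv
  have hqp : (↑Q : FractionalIdeal D⁰ (FractionRing D)) * ↑P = ↑P := by
    rw [← FractionalIdeal.coeIdeal_mul, hQPP]
  rw [← hu] at hqp
  have hq1 : (↑Q : FractionalIdeal D⁰ (FractionRing D)) = 1 := by
    have := congrArg (· * (↑u⁻¹ : FractionalIdeal D⁰ (FractionRing D))) hqp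
    simpa [mul_assoc, u.mul_inv] using this
  have : Q = ⊤ := by
    apply FractionalIdeal.coeIdeal_injective (K := FractionRing D)
    show ((Q : Ideal D) : FractionalIdeal D⁰ (FractionRing D)) = ↑(⊤ : Ideal D)
    simpa using hq1
  exact hQ.ne_top this
end

section
/- Let D be a commutative integral domain and M a maximal ideal of D with M invertible. Then for every nonzero prime ideal P properly contained in M and every n ≥ 1, P ⊆ M^n. -/
open scoped nonZeroDivisors

theorem prime_le_powers_of_invertible_maximal (D : Type*) [CommRing D] [IsDomain D]
    (M : Ideal D) (hM : M.IsMaximal) (hMinv : IsInvertibleIdeal D M)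
    (P : Ideal D) (hP : P.IsPrime) (hP0 : P ≠ ⊥) (hPM : P < M) :
    ∀ n : ℕ, 1 ≤ n → P ≤ M ^ n := by
  -- First, construct J with M * J = P
  obtain ⟨u, hu⟩ := hMinv
  set v : FractionalIdeal D⁰ (FractionRing D) := ((u⁻¹ : (FractionalIdeal D⁰ (FractionRing D))ˣ) : FractionalIdeal D⁰ (FractionRing D)) with hv
  have hvM : v * (M : FractionalIdeal D⁰ (FractionRing D)) = 1 := by
    rw [hv, ← hu]; exact u.inv_mul
  have hMv : (M : FractionalIdeal D⁰ (FractionRing D)) * v = 1 := by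
    rw [hv, ← hu]; exact u.mul_inv
  have hle1 : v * (P : FractionalIdeal D⁰ (FractionRing D)) ≤ 1 := by
    have h1 : v * (P : FractionalIdeal D⁰ (FractionRing D)) ≤
        v * (M : FractionalIdeal D⁰ (FractionRing D)) :=
      mul_right_mono (a := v) (FractionalIdeal.coeIdeal_le_coeIdeal _ |>.2 hPM.le)
    rwa [hvM] at h1
  obtain ⟨J, hJ⟩ := (FractionalIdeal.le_one_iff_exists_coeIdeal).1 hle1
  have hMJ : M * J = P := by
    apply FractionalIdeal.coeIdeal_injective (K := FractionRing D)
    push_cast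
    rw [hJ, ← mul_assoc, hMv, one_mul]
  have hJP : J ≤ P := by
    rcases (Ideal.IsPrime.mul_le hP).1 hMJ.le with h | h
    · exact absurd (le_antisymm hPM.le h ▸ hPM) (lt_irrefl _)
    · exact h
  intro n hn
  induction n with
  | zero => omega
  | succ k ih =>
    rcases Nat.eq_or_lt_of_le hn with h1 | h1
    · rw [← h1, pow_one]; exact hPM.le
    · have hk : 1 ≤ k := by omega
      have := ih hk
      calc P = M * J := hMJ.symm
        _ ≤ M * M ^ k := Ideal.mul_mono_right (hJP.trans this)
        _ = M ^ (k + 1) := by rw [pow_succ, mul_comm]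
end
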